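/- Let (R, m) be a Noetherian local domain and let V be a rank 1 valuation ring with valuation ν that birationally dominates R. Let {(R_n, m_n)} be the sequence of local quadratic transforms of R = R_0 along V. If the multiplicity sequence diverges, i.e., Σ_{n≥0} ν(m_n) = ∞, then V = ⋃_{n≥0} R_n. -/

import Mathlib

open Filter

section LQT

variable (F : Type) [Field F] {Γ : Type} [AddCommGroup Γ] [LinearOrder Γ] [IsOrderedAddMonoid Γ]

/-- The maximal ideal (as a set) of a local subring `A` of `F` dominated by the valuation
ring of the (additive) valuation `v`: the elements of `A` of positive value, together
with `0`. -/
def lqtMaxSet (v : F → Γ) (A : Subring F) : Set F :=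
  {a | a ∈ A ∧ (a = 0 ∨ 0 < v a)}

/-- The ring `A[m_A/x]`: the subring of `F` generated by `A` together with all quotients
`a / x` for `a` in the maximal ideal of `A`. -/
def lqtBlowup (v : F → Γ) (A : Subring F) (x : F) : Subring F :=
  Subring.closure ((A : Set F) ∪ {y | ∃ a ∈ lqtMaxSet F v A, y * x = a})

/-- The localization of a subring `B` of `F` at the center of the valuation `v`
(the prime ideal of `B` of elements of positive value): all fractions `b / s` with
`b, s ∈ B` and `s` a unit of the valuation ring (`v s = 0`). -/
def lqtLocalize (v : F → Γ) (B : Subring F) : Set F :=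
  {y | ∃ b ∈ B, ∃ s ∈ B, s ≠ 0 ∧ v s = 0 ∧ y * s = b}

/-- `A'` is the local quadratic transform of `A` along the valuation `v`: there is
`x ∈ m_A` of minimal value (so that `m_A V = x V`), and `A'` is the localization of
`A[m_A/x]` at the center of `v`. -/
def IsLQTAlong (v : F → Γ) (A A' : Subring F) : Prop :=
  ∃ x ∈ lqtMaxSet F v A, x ≠ 0 ∧ (∀ a ∈ lqtMaxSet F v A, a ≠ 0 → v x ≤ v a) ∧
    (A' : Set F) = lqtLocalize F v (lqtBlowup F v A x)

end LQT

/-- Let `(R₀, m₀)` be a Noetherian local domain with quotient field `F` and let `V` be a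
rank 1 valuation ring (given by a real-valued valuation `v` on `F`) birationally
dominating `R₀`.  Let `{Rₙ}` be the sequence of local quadratic transforms of `R₀` along
`V`.  If the multiplicity sequence diverges, i.e. `∑ₙ v(mₙ) = ∞`, then
`V = ⋃ₙ Rₙ`. -/
theorem union_eq_valuation_of_divergent_multiplicity
    (F : Type) [Field F] (v : F → ℝ)
    (hmul : ∀ a b : F, a ≠ 0 → b ≠ 0 → v (a * b) = v a + v b)
    (hadd : ∀ a b : F, a ≠ 0 → b ≠ 0 → a + b ≠ 0 → min (v a) (v b) ≤ v (a + b))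
    (V : Subring F) (hV : ∀ a : F, a ≠ 0 → (a ∈ V ↔ 0 ≤ v a))
    (R : ℕ → Subring F)
    (hNoeth : ∀ n, IsNoetherianRing (R n)) (hLocal : ∀ n, IsLocalRing (R n))
    (hsub : ∀ n, (R n : Set F) ⊆ V)
    (hdom : ∀ n, ∀ a ∈ R n, a ≠ 0 → v a = 0 → ∃ b ∈ R n, a * b = 1)
    (hfrac : ∀ y : F, ∃ a ∈ R 0, ∃ b ∈ R 0, b ≠ 0 ∧ y * b = a)
    (hLQT : ∀ n, IsLQTAlong F v (R n) (R (n + 1)))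
    (μ : ℕ → ℝ)
    (hμ : ∀ n, μ n = sInf (v '' {a | a ∈ lqtMaxSet F v (R n) ∧ a ≠ 0}))
    (hdiv : Tendsto (fun N => ∑ n ∈ Finset.range N, μ n) atTop atTop) :
    (V : Set F) = ⋃ n, (R n : Set F) := by
  apply Set.Subset.antisymm
  · intro y hy
    by_cases hy0 : y = 0
    · exact Set.mem_iUnion.2 ⟨0, by simp only [hy0, SetLike.mem_coe]; exact zero_mem _⟩
    by_contra hmem
    have hyn : ∀ n, y ∉ R n := fun n h => hmem (Set.mem_iUnion.2 ⟨n, h⟩)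
    have hv1 : v 1 = 0 := by
      have := hmul 1 1 one_ne_zero one_ne_zero
      simp at this; linarith
    have hvy : 0 ≤ v y := (hV y hy0).1 hy
    have step : ∀ n (b : F), b ∈ R n → b ≠ 0 → y * b ∈ R n →
        ∃ b' : F, b' ∈ R (n+1) ∧ b' ≠ 0 ∧ y * b' ∈ R (n+1) ∧ v b' = v b - μ n := by
      intro n b hb hb0 hyb
      have hvb0 : 0 ≤ v b := (hV b hb0).1 (hsub n hb)
      have hvbne : v b ≠ 0 := by
        intro h
        obtain ⟨c, hc, hbc⟩ := hdom n b hb hb0 h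
        refine hyn n ?_
        have hyc : y = (y * b) * c := by rw [mul_assoc, hbc, mul_one]
        rw [hyc]; exact mul_mem hyb hc
      have hvb : 0 < v b := lt_of_le_of_ne hvb0 (Ne.symm hvbne)
      have hbmax : b ∈ lqtMaxSet F v (R n) := ⟨hb, Or.inr hvb⟩
      have hyb0 : y * b ≠ 0 := mul_ne_zero hy0 hb0
      have hvyb : 0 < v (y * b) := by rw [hmul y b hy0 hb0]; linarith
      have hybmax : y * b ∈ lqtMaxSet F v (R n) := ⟨hyb, Or.inr hvyb⟩
      obtain ⟨x, hxmax, hx0, hmin, hset⟩ := hLQT n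
      have hμn : μ n = v x := by
        rw [hμ n]
        refine IsLeast.csInf_eq ⟨⟨x, ⟨hxmax, hx0⟩, rfl⟩, ?_⟩
        rintro z ⟨a, ⟨ha, ha0⟩, rfl⟩
        exact hmin a ha ha0
      have hvxinv : v x⁻¹ = - v x := by
        have h := hmul x x⁻¹ hx0 (inv_ne_zero hx0)
        rw [mul_inv_cancel₀ hx0, hv1] at h
        linarith
      have hblow : ∀ c : F, c ∈ lqtMaxSet F v (R n) → c * x⁻¹ ∈ R (n+1) := by
        intro c hc
        have h1 : c * x⁻¹ ∈ lqtBlowup F v (R n) x :=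
          Subring.subset_closure (Or.inr ⟨c, hc, inv_mul_cancel_right₀ hx0 c⟩)
        have h2 : c * x⁻¹ ∈ lqtLocalize F v (lqtBlowup F v (R n) x) :=
          ⟨c * x⁻¹, h1, 1, one_mem _, one_ne_zero, hv1, mul_one _⟩
        rw [← SetLike.mem_coe, hset]; exact h2
      refine ⟨b * x⁻¹, hblow b hbmax, mul_ne_zero hb0 (inv_ne_zero hx0), ?_, ?_⟩
      · have h := hblow (y * b) hybmax
        rwa [mul_assoc] at h
      · rw [hmul b x⁻¹ hb0 (inv_ne_zero hx0), hvxinv, hμn]; ring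
    obtain ⟨a, ha, b0, hb0mem, hb00, hyb0eq⟩ := hfrac y
    have main : ∀ n, ∃ b : F, b ∈ R n ∧ b ≠ 0 ∧ y * b ∈ R n ∧
        v b = v b0 - ∑ k ∈ Finset.range n, μ k := by
      intro n
      induction n with
      | zero => exact ⟨b0, hb0mem, hb00, by rw [hyb0eq]; exact ha, by simp⟩
      | succ n ih =>
        obtain ⟨b, h1, h2, h3, h4⟩ := ih
        obtain ⟨b', h1', h2', h3', h4'⟩ := step n b h1 h2 h3
        exact ⟨b', h1', h2', h3', by rw [h4', h4, Finset.sum_range_succ]; ring⟩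
    obtain ⟨N, hN⟩ := (hdiv.eventually (eventually_gt_atTop (v b0))).exists
    obtain ⟨b, hb, hb0', _, heq⟩ := main N
    have hvb : 0 ≤ v b := (hV b hb0').1 (hsub N hb)
    linarith
  · exact Set.iUnion_subset hsub
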